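/- Let G = (V, E) be a prime simple graph. Then every vertex x ∈ V is an endpoint of an induced two-edge path, i.e. there exist vertices y, z ∈ V with x adjacent to y, y adjacent to z, and x not adjacent to z. -/

import Mathlib

/-- A module of a simple graph: every vertex outside `X` is adjacent either to all
vertices of `X` or to none of them. -/
def IsGraphModule {V : Type*} (G : SimpleGraph V) (X : Set V) : Prop :=
  ∀ y ∉ X, (∀ x ∈ X, G.Adj y x) ∨ (∀ x ∈ X, ¬ G.Adj y x)

/-- A prime graph: at least four vertices and only trivial modules. -/
def IsPrimeGraph {V : Type*} [Fintype V] (G : SimpleGraph V) : Prop :=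
  4 ≤ Fintype.card V ∧
    ∀ X : Set V, IsGraphModule G X → X = ∅ ∨ (∃ v, X = {v}) ∨ X = Set.univ

/-- In a prime graph, every vertex is an endpoint of an induced
two-edge path. -/
theorem stmt5 {V : Type*} [Fintype V] (G : SimpleGraph V)
    (hG : IsPrimeGraph G) (x : V) :
    ∃ y z : V, G.Adj x y ∧ G.Adj y z ∧ ¬ G.Adj x z ∧ x ≠ z := by
  by_contra hcon
  push_neg at hcon
  obtain ⟨hcard, hprime⟩ := hG
  classical
  -- two distinct vertices different from x
  have h3 : 1 < (Finset.univ.erase x).card := by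
    have := Finset.card_erase_of_mem (Finset.mem_univ x)
    rw [Finset.card_univ] at this
    omega
  obtain ⟨a, ha, b, hb, hab⟩ := Finset.one_lt_card.mp h3
  have hax : a ≠ x := Finset.ne_of_mem_erase ha
  have hbx : b ≠ x := Finset.ne_of_mem_erase hb
  -- {x}ᶜ is never a trivial set, so it cannot be a module
  have key : ¬ IsGraphModule G ({x}ᶜ : Set V) := by
    intro hm
    rcases hprime _ hm with h | ⟨v, hv⟩ | h
    · exact (Set.eq_empty_iff_forall_notMem.mp h a) (by simpa using hax)
    · have hav : a ∈ ({v} : Set V) := hv ▸ (by simpa using hax)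
      have hbv : b ∈ ({v} : Set V) := hv ▸ (by simpa using hbx)
      simp only [Set.mem_singleton_iff] at hav hbv
      exact hab (hav.trans hbv.symm)
    · have : x ∈ ({x}ᶜ : Set V) := h ▸ Set.mem_univ x
      exact this rfl
  -- the closed neighborhood of x is a module
  have hmodX : IsGraphModule G (insert x (G.neighborSet x)) := by
    intro w hw
    right
    intro c hc hwc
    have hxw : ¬ G.Adj x w := fun h' => hw (Set.mem_insert_iff.mpr (Or.inr h'))
    rcases Set.mem_insert_iff.mp hc with rfl | hadj
    · exact hxw hwc.symm
    · have hxweq : x = w := hcon c w hadj hwc.symm hxw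
      exact hw (hxweq ▸ Set.mem_insert x _)
  rcases hprime _ hmodX with h | ⟨v, hv⟩ | h
  · exact Set.eq_empty_iff_forall_notMem.mp h x (Set.mem_insert x _)
  · -- x has no neighbors
    have hvx : x = v := by
      have : x ∈ ({v} : Set V) := hv ▸ Set.mem_insert x _
      simpa using this
    subst hvx
    have hnone : ∀ c, ¬ G.Adj x c := by
      intro c hc
      have : c ∈ ({x} : Set V) := hv ▸ Set.mem_insert_iff.mpr (Or.inr hc)
      simp only [Set.mem_singleton_iff] at this
      exact G.loopless.irrefl x (this ▸ hc)
    exact key (fun w hw => Or.inr (fun c _ hwc => by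
      have hwx : w = x := by simpa using hw
      exact hnone c (hwx ▸ hwc)))
  · -- x is adjacent to everything else
    have hall : ∀ c, c ≠ x → G.Adj x c := by
      intro c hc
      have : c ∈ insert x (G.neighborSet x) := h ▸ Set.mem_univ c
      rcases Set.mem_insert_iff.mp this with rfl | hadj
      · exact absurd rfl hc
      · exact hadj
    exact key (fun w hw => Or.inl (fun c hc => by
      have hwx : w = x := by simpa using hw
      exact hwx ▸ hall c (by simpa using hc)))
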